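/- Let H be a Hilbert space, S a bounded positive self-adjoint operator on H with spectrum contained in [A,B] where 0 < A ≤ B < ∞, and let g ∈ H be nonzero. Set γ = φ(S)g with φ continuous and positive on [A,B], and let Q ∈ (0,1] be such that the spectrum of Sφ²(S) lies in [QB', B'] for some B' > 0 (i.e., Q is the ratio of min to max of sφ²(s) over the spectrum of S). Then ‖γ/‖γ‖ − S^{-1/2}g/‖S^{-1/2}g‖‖ ≤ (1 − Q^{1/4})·√(2/(1+Q)). -/

import Mathlib

set_option maxHeartbeats 1000000

open scoped InnerProductSpace
open RCLike

private lemma inner_mono_op {H : Type*} [NormedAddCommGroup H] [InnerProductSpace ℂ H]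
    [CompleteSpace H] {T₁ T₂ : H →L[ℂ] H} (h : T₁ ≤ T₂) (g : H) :
    re ⟪T₁ g, g⟫_ℂ ≤ re ⟪T₂ g, g⟫_ℂ := by
  have := (ContinuousLinearMap.le_def T₁ T₂).mp h |>.inner_nonneg_left g
  simp only [ContinuousLinearMap.sub_apply, inner_sub_left, map_sub] at this
  have h2 := (Complex.le_def.mp this).1
  rw [Complex.sub_re, Complex.zero_re] at h2
  exact sub_nonneg.mp h2

private lemma inner_selfadj_swap {H : Type*} [NormedAddCommGroup H] [InnerProductSpace ℂ H]
    [CompleteSpace H] {a : H →L[ℂ] H} (ha : IsSelfAdjoint a) (x g : H) :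
    ⟪a x, g⟫_ℂ = ⟪x, a g⟫_ℂ := by
  conv_lhs => rw [← ha.adjoint_eq]
  rw [ContinuousLinearMap.adjoint_inner_left]

private lemma re_inner_add_smul {H : Type*} [NormedAddCommGroup H] [InnerProductSpace ℂ H]
    (T U : H →L[ℂ] H) (r : ℝ) (g : H) :
    re ⟪(T + r • U) g, g⟫_ℂ = re ⟪T g, g⟫_ℂ + r * re ⟪U g, g⟫_ℂ := by
  rw [ContinuousLinearMap.add_apply, ContinuousLinearMap.smul_apply, inner_add_left,
    RCLike.real_smul_eq_coe_smul (K := ℂ), inner_smul_left]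
  simp

private lemma re_inner_smul_op {H : Type*} [NormedAddCommGroup H] [InnerProductSpace ℂ H]
    (U : H →L[ℂ] H) (r : ℝ) (g : H) :
    re ⟪(r • U) g, g⟫_ℂ = r * re ⟪U g, g⟫_ℂ := by
  rw [ContinuousLinearMap.smul_apply, RCLike.real_smul_eq_coe_smul (K := ℂ), inner_smul_left]
  simp

/-- Kantorovich-type error bound for approximating the canonical tight window
`g^t = S^{-1/2} g` by `γ = φ(S) g`. -/
theorem stmt0 {H : Type*} [NormedAddCommGroup H] [InnerProductSpace ℂ H] [CompleteSpace H]
    (S : H →L[ℂ] H) (hS : IsSelfAdjoint S) (A B : ℝ) (hA : 0 < A) (hAB : A ≤ B)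
    (hspec : spectrum ℝ S ⊆ Set.Icc A B)
    (g : H) (hg : g ≠ 0)
    (φ : ℝ → ℝ) (hφc : ContinuousOn φ (Set.Icc A B))
    (hφpos : ∀ s ∈ Set.Icc A B, 0 < φ s)
    (Q B' : ℝ) (hQ : Q ∈ Set.Ioc (0:ℝ) 1) (hB' : 0 < B')
    (hQspec : ∀ s ∈ spectrum ℝ S, Q * B' ≤ s * (φ s)^2 ∧ s * (φ s)^2 ≤ B') :
    ‖‖(cfc φ S) g‖⁻¹ • (cfc φ S) g -
      ‖(cfc (fun s : ℝ => s ^ (-(1/2) : ℝ)) S) g‖⁻¹ •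
        (cfc (fun s : ℝ => s ^ (-(1/2) : ℝ)) S) g‖ ≤
      (1 - Q ^ ((1:ℝ)/4)) * Real.sqrt (2 / (1 + Q)) := by
  obtain ⟨hQ0, hQ1⟩ := hQ
  set fr : ℝ → ℝ := fun s : ℝ => s ^ (-(1/2) : ℝ) with hfrdef
  -- spectrum facts
  have hsp : ∀ s ∈ spectrum ℝ S, 0 < s := fun s hs => lt_of_lt_of_le hA (hspec hs).1
  have hφs : ∀ s ∈ spectrum ℝ S, 0 < φ s := fun s hs => hφpos s (hspec hs)
  have hφc' : ContinuousOn φ (spectrum ℝ S) := hφc.mono hspec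
  have hfrc : ContinuousOn fr (spectrum ℝ S) := fun s hs =>
    (Real.continuousAt_rpow_const s _ (Or.inl (hsp s hs).ne')).continuousWithinAt
  have hfr_eq : ∀ s ∈ spectrum ℝ S, fr s = (Real.sqrt s)⁻¹ := by
    intro s hs
    rw [hfrdef]
    rw [Real.sqrt_eq_rpow, ← Real.rpow_neg (hsp s hs).le]
  -- constants
  set q : ℝ := Q ^ ((1:ℝ)/4) with hqdef
  have hq0 : 0 < q := Real.rpow_pos_of_pos hQ0 _
  have hq4 : q ^ 4 = Q := by
    rw [hqdef, ← Real.rpow_natCast (Q ^ ((1:ℝ)/4)) 4, ← Real.rpow_mul hQ0.le]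
    norm_num
  have hq1 : q ≤ 1 := Real.rpow_le_one hQ0.le hQ1 (by norm_num)
  set b : ℝ := Real.sqrt B' with hbdef
  have hb0 : 0 < b := Real.sqrt_pos.mpr hB'
  have hb2 : b ^ 2 = B' := Real.sq_sqrt hB'.le
  -- pointwise bounds
  have hbound : ∀ s ∈ spectrum ℝ S,
      q^2 * b ≤ Real.sqrt s * φ s ∧ Real.sqrt s * φ s ≤ b := by
    intro s hs
    obtain ⟨h1, h2⟩ := hQspec s hs
    have hs0 := hsp s hs
    have hsq : (Real.sqrt s * φ s)^2 = s * (φ s)^2 := by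
      rw [mul_pow, Real.sq_sqrt hs0.le]
    have hpos : 0 < Real.sqrt s * φ s := mul_pos (Real.sqrt_pos.mpr hs0) (hφs s hs)
    have hm : (q^2*b)^2 = Q * B' := by rw [← hq4, ← hb2]; ring
    constructor
    · nlinarith [mul_pos (mul_pos (pow_pos hq0 2) hb0) hpos]
    · nlinarith [mul_pos hb0 hpos]
  -- the key scalar inequality on the spectrum
  have hscalar : ∀ s ∈ spectrum ℝ S,
      φ s * φ s + ((q^2*b)*b) * (fr s * fr s) ≤ (b*(1+q^2)) * (φ s * fr s) := by
    intro s hs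
    obtain ⟨hl, hu⟩ := hbound s hs
    have hs0 := hsp s hs
    have hr0 : 0 < Real.sqrt s := Real.sqrt_pos.mpr hs0
    rw [hfr_eq s hs]
    set r := Real.sqrt s with hrdef
    set u := φ s with hudef
    rw [← sub_nonneg]
    have key : (b*(1+q^2))*(u*r⁻¹) - (u*u + ((q^2*b)*b)*(r⁻¹*r⁻¹))
        = ((r*u - q^2*b)*(b - r*u)) / (r * r) := by
      field_simp
      ring
    rw [key]
    exact div_nonneg (mul_nonneg (by linarith) (by linarith)) (by positivity)
  -- continuity of the combined functions
  have hc1 : ContinuousOn (fun s => φ s * φ s + ((q^2*b)*b) * (fr s * fr s)) (spectrum ℝ S) :=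
    ((hφc'.mul hφc').add (continuousOn_const.mul (hfrc.mul hfrc)))
  have hc2 : ContinuousOn (fun s => (b*(1+q^2)) * (φ s * fr s)) (spectrum ℝ S) :=
    continuousOn_const.mul (hφc'.mul hfrc)
  -- operator inequality
  have hop : cfc (fun s => φ s * φ s + ((q^2*b)*b) * (fr s * fr s)) S
      ≤ cfc (fun s => (b*(1+q^2)) * (φ s * fr s)) S := cfc_mono hscalar hc1 hc2
  -- split the cfc's
  have hsplit1 : cfc (fun s => φ s * φ s + ((q^2*b)*b) * (fr s * fr s)) S
      = cfc φ S * cfc φ S + ((q^2*b)*b) • (cfc fr S * cfc fr S) := by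
    rw [cfc_add (a := S) (fun s => φ s * φ s) (fun s => ((q^2*b)*b) * (fr s * fr s))
        (hφc'.mul hφc') (continuousOn_const.mul (hfrc.mul hfrc)),
      cfc_const_mul ((q^2*b)*b) (fun s => fr s * fr s) S (hfrc.mul hfrc),
      cfc_mul φ φ S hφc' hφc', cfc_mul fr fr S hfrc hfrc]
  have hsplit2 : cfc (fun s => (b*(1+q^2)) * (φ s * fr s)) S
      = (b*(1+q^2)) • (cfc φ S * cfc fr S) := by
    rw [cfc_const_mul (b*(1+q^2)) (fun s => φ s * fr s) S (hφc'.mul hfrc), cfc_mul φ fr S hφc' hfrc]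
  rw [hsplit1, hsplit2] at hop
  -- selfadjointness of the pieces
  have haφ : IsSelfAdjoint (cfc φ S) := cfc_predicate φ S
  -- the three real quantities
  set X : ℝ := re ⟪(cfc φ S * cfc φ S) g, g⟫_ℂ with hXdef
  set Y : ℝ := re ⟪(cfc fr S * cfc fr S) g, g⟫_ℂ with hYdef
  set P : ℝ := re ⟪(cfc φ S * cfc fr S) g, g⟫_ℂ with hPdef
  have hineq : X + ((q^2*b)*b) * Y ≤ (b*(1+q^2)) * P := by
    have := inner_mono_op hop g
    rwa [re_inner_add_smul, re_inner_smul_op] at this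
  -- identities
  have hX : X = ‖cfc φ S g‖^2 := by
    rw [hXdef, ContinuousLinearMap.mul_apply, inner_selfadj_swap haφ, ← inner_conj_symm, conj_re,
      inner_self_eq_norm_sq]
  have hY : Y = ‖cfc fr S g‖^2 := by
    rw [hYdef, ContinuousLinearMap.mul_apply, inner_selfadj_swap (cfc_predicate fr S),
      ← inner_conj_symm, conj_re, inner_self_eq_norm_sq]
  have hP : P = re ⟪cfc φ S g, cfc fr S g⟫_ℂ := by
    rw [hPdef, ContinuousLinearMap.mul_apply, inner_selfadj_swap haφ, inner_re_symm]
  -- positivity of P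
  have hε : (0:ℝ) < q^2*b/B := div_pos (mul_pos (pow_pos hq0 2) hb0) (hA.trans_le hAB)
  have hPpos : 0 < P := by
    have hptle : ∀ s ∈ spectrum ℝ S, q^2*b/B ≤ φ s * fr s := by
      intro s hs
      obtain ⟨hl, _⟩ := hbound s hs
      have hs0 := hsp s hs
      have hr0 : 0 < Real.sqrt s := Real.sqrt_pos.mpr hs0
      rw [hfr_eq s hs]
      have hrr : Real.sqrt s * Real.sqrt s = s := Real.mul_self_sqrt hs0.le
      have hsB : s ≤ B := (hspec hs).2
      have heq : φ s * (Real.sqrt s)⁻¹ = (Real.sqrt s * φ s) / (Real.sqrt s * Real.sqrt s) := by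
        rw [mul_comm (Real.sqrt s) (φ s), mul_div_mul_right _ _ hr0.ne', div_eq_mul_inv]
      rw [heq, div_le_div_iff₀ (hA.trans_le hAB) (by positivity)]
      nlinarith [mul_pos (mul_pos (pow_pos hq0 2) hb0) hs0, hrr,
        mul_le_mul hl hsB hs0.le (le_trans (by positivity) hl)]
    have hop2 : cfc (fun _ : ℝ => q^2*b/B) S ≤ cfc (fun s => φ s * fr s) S :=
      cfc_mono hptle continuousOn_const (hφc'.mul hfrc)
    have h2 := inner_mono_op hop2 g
    rw [cfc_const _ _ hS, cfc_mul _ _ _ hφc' hfrc] at h2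
    rw [Algebra.algebraMap_eq_smul_one] at h2
    rw [re_inner_smul_op] at h2
    simp only [ContinuousLinearMap.one_apply, inner_self_eq_norm_sq] at h2
    have hgn : 0 < ‖g‖^2 := pow_pos (norm_pos_iff.mpr hg) 2
    calc (0:ℝ) < (q^2*b/B) * ‖g‖^2 := mul_pos hε hgn
      _ ≤ P := h2
  -- norms are positive
  set nγ : ℝ := ‖cfc φ S g‖ with hnγdef
  set nw : ℝ := ‖cfc fr S g‖ with hnwdef
  have hcs : P ≤ nγ * nw := hP ▸ re_inner_le_norm _ _
  have hnγ : 0 < nγ := by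
    by_contra h
    push_neg at h
    have : nγ = 0 := le_antisymm h (norm_nonneg _)
    rw [this, zero_mul] at hcs
    linarith
  have hnw : 0 < nw := by
    by_contra h
    push_neg at h
    have : nw = 0 := le_antisymm h (norm_nonneg _)
    rw [this, mul_zero] at hcs
    linarith
  -- AM-GM step
  have hamgm : 2*(q*b)*(nγ*nw) ≤ X + ((q^2*b)*b) * Y := by
    rw [hX, hY]
    nlinarith [sq_nonneg (nγ - q*b*nw)]
  have hkey : 2*q*(nγ*nw) ≤ (1+q^2) * P := by
    have h3 : b*(2*q*(nγ*nw)) ≤ b*((1+q^2) * P) := by nlinarith [le_trans hamgm hineq]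
    exact le_of_mul_le_mul_left h3 hb0
  -- the norm computation
  set D : ℝ := ‖nγ⁻¹ • (cfc φ S) g - nw⁻¹ • (cfc fr S) g‖ with hDdef
  have hD2 : D^2 = 2 - 2 * (nγ⁻¹ * nw⁻¹) * P := by
    rw [hDdef, norm_sub_sq (𝕜 := ℂ), norm_smul, norm_smul]
    rw [RCLike.real_smul_eq_coe_smul (K := ℂ) nγ⁻¹, RCLike.real_smul_eq_coe_smul (K := ℂ) nw⁻¹,
      inner_smul_left, inner_smul_right]
    simp only [norm_inv, Real.norm_eq_abs, abs_of_pos hnγ, abs_of_pos hnw, map_mul, conj_ofReal,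
      ofReal_re, mul_re, ofReal_im, zero_mul, sub_zero]
    rw [← hP]
    field_simp
    rw [← hnγdef, ← hnwdef]
    ring_nf
  -- final numeric chain
  have hpos1 : (0:ℝ) < 1 + q^2 := by positivity
  have hinvpos : (0:ℝ) < nγ⁻¹ * nw⁻¹ := mul_pos (inv_pos.mpr hnγ) (inv_pos.mpr hnw)
  have ht0 : 2*q/(1+q^2) ≤ nγ⁻¹ * nw⁻¹ * P := by
    rw [div_le_iff₀ hpos1]
    have h4 := mul_le_mul_of_nonneg_left hkey hinvpos.le
    have h5 : nγ⁻¹ * nw⁻¹ * (2*q*(nγ*nw)) = 2*q := by field_simp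
    calc 2*q = nγ⁻¹ * nw⁻¹ * (2*q*(nγ*nw)) := h5.symm
      _ ≤ nγ⁻¹ * nw⁻¹ * ((1+q^2) * P) := h4
      _ = nγ⁻¹ * nw⁻¹ * P * (1+q^2) := by ring
  have hpos4 : (0:ℝ) < 1 + Q := by linarith
  have hQq2 : Q ≤ q^2 := by
    rw [← hq4]
    exact pow_le_pow_of_le_one hq0.le hq1 (by norm_num)
  have hfinal2 : D^2 ≤ ((1-q) * Real.sqrt (2/(1+Q)))^2 := by
    rw [hD2, mul_pow, Real.sq_sqrt (by positivity : (0:ℝ) ≤ 2/(1+Q))]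
    have step2 : 2 - 2*(2*q/(1+q^2)) = (1-q)^2 * (2/(1+q^2)) := by
      field_simp
      ring
    have step3 : (1-q)^2 * (2/(1+q^2)) ≤ (1-q)^2 * (2/(1+Q)) := by
      gcongr
    linarith
  have hDnn : 0 ≤ D := by rw [hDdef]; positivity
  have hRHSnn : 0 ≤ (1-q) * Real.sqrt (2/(1+Q)) :=
    mul_nonneg (by linarith) (Real.sqrt_nonneg _)
  calc D = Real.sqrt (D^2) := (Real.sqrt_sq hDnn).symm
    _ ≤ Real.sqrt (((1-q)*Real.sqrt (2/(1+Q)))^2) := Real.sqrt_le_sqrt hfinal2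
    _ = (1-q)*Real.sqrt (2/(1+Q)) := Real.sqrt_sq hRHSnn
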